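/- arXiv:2002.09421 — 2 statements merged into one kernel-verified Lean document; each statement's English description precedes it below -/
import Mathlib

section
/- The recursive rule is equivariant under permutations: for any 1D node family X, any multi-index α of length d+1, and any permutation σ of {0,...,d}, one has b_X(σ(α)) = σ(b_X(α)), where σ acts on tuples by permuting coordinates. -/
open scoped BigOperators

/-- The recursively defined barycentric node `b_X(α)` for a multi-index
`α : Fin (d+1) → ℕ`, built from a 1D node family `X` (where `X n i = x_{n,i}`). -/
noncomputable def recNode (X : ℕ → ℕ → ℝ) : (d : ℕ) → (Fin (d + 1) → ℕ) → (Fin (d + 1) → ℝ)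
  | 0, _ => fun _ => 1
  | d + 1, α => fun k =>
      (∑ i : Fin (d + 2),
          X (∑ j, α j) ((∑ j, α j) - α i) *
            ((Fin.insertNth i (0 : ℝ) (recNode X d (α ∘ Fin.succAbove i)) : Fin (d + 2) → ℝ) k)) /
      (∑ i : Fin (d + 2), X (∑ j, α j) ((∑ j, α j) - α i))

/-- For a permutation `σ` of `Fin (n+1)` and an index `i`, there is a permutation `τ` of
`Fin n` intertwining the `succAbove` embeddings at `i` and `σ i`. -/
lemma perm_succAbove (n : ℕ) (σ : Equiv.Perm (Fin (n + 1))) (i : Fin (n + 1)) :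
    ∃ τ : Equiv.Perm (Fin n), ∀ j, σ (i.succAbove j) = (σ i).succAbove (τ j) := by
  let π : Option (Fin n) ≃ Option (Fin n) :=
    (finSuccEquiv' i).symm.trans (σ.trans (finSuccEquiv' (σ i)))
  refine ⟨Equiv.removeNone π, fun j => ?_⟩
  have hπ : π (some j) = finSuccEquiv' (σ i) (σ (i.succAbove j)) := by
    simp [π, Equiv.trans_apply]
  have hx : ∃ x, finSuccEquiv' (σ i) (σ (i.succAbove j)) = some x := by
    rcases h : finSuccEquiv' (σ i) (σ (i.succAbove j)) with _ | x
    · exfalso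
      have h2 : finSuccEquiv' (σ i) (σ i) = none := finSuccEquiv'_at (σ i)
      have := (finSuccEquiv' (σ i)).injective (h.trans h2.symm)
      have := σ.injective this
      exact Fin.succAbove_ne i j this
    · exact ⟨x, rfl⟩
  obtain ⟨x, hx⟩ := hx
  have hrm : Equiv.removeNone π j = x := by
    have h1 := Equiv.removeNone_some π ⟨x, hπ.trans hx⟩
    exact Option.some_injective _ (h1.trans (hπ.trans hx))
  rw [hrm]
  have := congrArg (finSuccEquiv' (σ i)).symm hx
  rw [Equiv.symm_apply_apply] at this
  rw [this, finSuccEquiv'_symm_some]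

/-- the recursive rule is equivariant under permutations of the
barycentric coordinates: `b_X(σ(α)) = σ(b_X(α))`, where `(σ·v) i = v (σ⁻¹ i)`. -/
theorem recNode_perm_equivariant
    (X : ℕ → ℕ → ℝ)
    (hIcc : ∀ n i, i ≤ n → X n i ∈ Set.Icc (0 : ℝ) 1)
    (hmono : ∀ n i j, i < j → j ≤ n → X n i < X n j)
    (hsym : ∀ n i, i ≤ n → X n i = 1 - X n (n - i))
    (d : ℕ) (α : Fin (d + 1) → ℕ) (σ : Equiv.Perm (Fin (d + 1))) :
    recNode X d (α ∘ ⇑σ.symm) = (recNode X d α) ∘ ⇑σ.symm := by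
  induction d with
  | zero => rfl
  | succ d IH =>
    funext k
    have hsum : (∑ j, (α ∘ ⇑σ.symm) j) = ∑ j, α j := by
      exact Equiv.sum_comp σ.symm α
    show recNode X (d + 1) (α ∘ ⇑σ.symm) k = recNode X (d + 1) α (σ.symm k)
    have hden : (∑ i : Fin (d + 2), X (∑ j, α j) ((∑ j, α j) - (α ∘ ⇑σ.symm) i))
        = ∑ i : Fin (d + 2), X (∑ j, α j) ((∑ j, α j) - α i) := by
      refine (Fintype.sum_equiv σ _ _ fun i' => ?_).symm
      simp
    have hnum : (∑ i : Fin (d + 2),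
          X (∑ j, α j) ((∑ j, α j) - (α ∘ ⇑σ.symm) i) *
            ((Fin.insertNth i (0 : ℝ)
              (recNode X d ((α ∘ ⇑σ.symm) ∘ Fin.succAbove i)) : Fin (d + 2) → ℝ) k))
        = ∑ i : Fin (d + 2),
          X (∑ j, α j) ((∑ j, α j) - α i) *
            ((Fin.insertNth i (0 : ℝ)
              (recNode X d (α ∘ Fin.succAbove i)) : Fin (d + 2) → ℝ) (σ.symm k)) := by
      refine (Fintype.sum_equiv σ _ _ fun i' => ?_).symm
      simp only [Function.comp_apply, Equiv.symm_apply_apply]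
      obtain ⟨τ, hτ⟩ := perm_succAbove (d + 1) σ i'
      have hcomp : (α ∘ ⇑σ.symm) ∘ (σ i').succAbove = (α ∘ i'.succAbove) ∘ ⇑τ.symm := by
        funext m
        have : σ.symm ((σ i').succAbove m) = i'.succAbove (τ.symm m) := by
          conv_lhs => rw [show m = τ (τ.symm m) by simp, ← hτ, Equiv.symm_apply_apply]
        simp [Function.comp_apply, this]
      rw [hcomp, IH (α ∘ i'.succAbove) τ]
      congr 1
      by_cases h : σ.symm k = i'
      · have hk : k = σ i' := by rw [← h, Equiv.apply_symm_apply]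
        rw [h, hk, Fin.insertNth_apply_same, Fin.insertNth_apply_same]
      · obtain ⟨m, hm⟩ := Fin.exists_succAbove_eq h
        have hk : k = (σ i').succAbove (τ m) := by
          rw [← hτ, hm, Equiv.apply_symm_apply]
        have h1 : (Fin.insertNth i' (0 : ℝ) (recNode X d (α ∘ i'.succAbove)) :
              Fin (d + 2) → ℝ) (σ.symm k)
            = recNode X d (α ∘ i'.succAbove) m := by
          rw [← hm, Fin.insertNth_apply_succAbove]
        have h2 : (Fin.insertNth (σ i') (0 : ℝ)
              (recNode X d (α ∘ i'.succAbove) ∘ ⇑τ.symm) : Fin (d + 2) → ℝ) k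
            = recNode X d (α ∘ i'.succAbove) m := by
          rw [hk, Fin.insertNth_apply_succAbove]
          simp
        rw [h1, h2]
    simp only [recNode, hsum]
    rw [hnum, hden]
end

section
/- Boundary trace property (general): let X be a 1D node family with x_{n,0} = 0 and x_{n,n} = 1 for all n ≥ 1. For any multi-index α of length d+1 ≥ 2 with |α| ≥ 1 and α_j = 0, one has b_X(α) = (b_X(α_{\j}))_{+j}. That is, nodes with a zero multi-index entry lie on the corresponding facet and equal the lower-dimensional recursive node mapped onto that facet. -/
open scoped BigOperators

lemma myValSuccAbove {n : ℕ} (p : Fin (n+1)) (k : Fin n) :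
    ((p.succAbove k : Fin (n+1)) : ℕ) = if (k : ℕ) < (p : ℕ) then (k : ℕ) else (k : ℕ) + 1 := by
  rcases Fin.lt_or_le (Fin.castSucc k) p with h | h
  · rw [Fin.succAbove_of_castSucc_lt _ _ h]
    simp only [Fin.lt_def, Fin.coe_castSucc] at h
    simp [h]
  · rw [Fin.succAbove_of_le_castSucc _ _ h]
    simp only [Fin.le_def, Fin.coe_castSucc] at h
    rw [Fin.val_succ, if_neg (by omega)]

lemma hatExists {n : ℕ} (j : Fin (n+2)) (i' : Fin (n+1)) :
    ∃ k : Fin (n+1),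
      (j.succAbove i').succAbove k = j ∧
      ∀ t : Fin n, (j.succAbove i').succAbove (k.succAbove t) = j.succAbove (i'.succAbove t) := by
  refine ⟨⟨if (i' : ℕ) < (j : ℕ) then (j : ℕ) - 1 else (j : ℕ), ?_⟩, ?_, ?_⟩
  · have := j.isLt; have := i'.isLt; split_ifs <;> omega
  · apply Fin.ext
    have := j.isLt; have := i'.isLt
    simp only [myValSuccAbove]
    split_ifs <;> simp_all <;> omega
  · intro t
    apply Fin.ext
    have := j.isLt; have := i'.isLt; have := t.isLt
    simp only [myValSuccAbove]
    split_ifs <;> simp_all <;> omega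

lemma myInsertApply {n : ℕ} (i : Fin (n+1)) (x : ℝ) (f : Fin n → ℝ) {m' : Fin n}
    {m : Fin (n+1)} (h : i.succAbove m' = m) :
    (Fin.insertNth i x f : Fin (n+1) → ℝ) m = f m' := by
  subst h; exact Fin.insertNth_apply_succAbove (α := fun _ => ℝ) i x f m'

lemma myInsertComm {n : ℕ} (j : Fin (n+2)) (i' : Fin (n+1)) (k : Fin (n+1))
    (h1 : (j.succAbove i').succAbove k = j)
    (h2 : ∀ t : Fin n, (j.succAbove i').succAbove (k.succAbove t) = j.succAbove (i'.succAbove t))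
    (a b : ℝ) (g : Fin n → ℝ) :
    (Fin.insertNth (j.succAbove i') a ((Fin.insertNth k b g : Fin (n+1) → ℝ)) : Fin (n+2) → ℝ) =
      (Fin.insertNth j b ((Fin.insertNth i' a g : Fin (n+1) → ℝ)) : Fin (n+2) → ℝ) := by
  funext m
  rcases eq_or_ne m j with hm | hm
  · rw [hm, Fin.insertNth_apply_same, myInsertApply _ _ _ h1, Fin.insertNth_apply_same]
  · obtain ⟨t, ht⟩ := Fin.exists_succAbove_eq hm
    rw [myInsertApply _ _ _ ht]
    rcases eq_or_ne t i' with rfl | hti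
    · rw [← ht, Fin.insertNth_apply_same, Fin.insertNth_apply_same]
    · obtain ⟨s, rfl⟩ := Fin.exists_succAbove_eq hti
      rw [Fin.insertNth_apply_succAbove, ← ht,
        myInsertApply _ _ _ (h2 s), Fin.insertNth_apply_succAbove]

/-- boundary trace property (general): for a 1D node family with
`x_{n,0} = 0` and `x_{n,n} = 1`, if `α_j = 0` then `b_X(α) = (b_X(α_{\j}))_{+j}`. -/
theorem recNode_trace
    (X : ℕ → ℕ → ℝ)
    (hIcc : ∀ n i, i ≤ n → X n i ∈ Set.Icc (0 : ℝ) 1)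
    (hmono : ∀ n i j, i < j → j ≤ n → X n i < X n j)
    (hsym : ∀ n i, i ≤ n → X n i = 1 - X n (n - i))
    (h0 : ∀ n, 1 ≤ n → X n 0 = 0) (h1 : ∀ n, 1 ≤ n → X n n = 1)
    (d : ℕ) (α : Fin (d + 2) → ℕ) (hα : 1 ≤ ∑ i, α i)
    (j : Fin (d + 2)) (hj : α j = 0) :
    recNode X (d + 1) α =
      (Fin.insertNth j (0 : ℝ) (recNode X d (α ∘ Fin.succAbove j)) : Fin (d + 2) → ℝ) := by
  induction d with
  | zero =>
    have hn0 : α (j.succAbove 0) = ∑ t, α t := by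
      have h := Fin.sum_univ_succAbove α j
      rw [hj, zero_add, Fin.sum_univ_one] at h
      exact h.symm
    funext k
    show (∑ i : Fin (0+2), X (∑ t, α t) ((∑ t, α t) - α i) *
        (Fin.insertNth i (0:ℝ) (recNode X 0 (α ∘ Fin.succAbove i)) : Fin (0+2) → ℝ) k) /
      (∑ i : Fin (0+2), X (∑ t, α t) ((∑ t, α t) - α i)) =
      (Fin.insertNth j (0:ℝ) (recNode X 0 (α ∘ Fin.succAbove j)) : Fin (0+2) → ℝ) k
    have e1 : (∑ i : Fin (0+2), X (∑ t, α t) ((∑ t, α t) - α i) *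
          (Fin.insertNth i (0:ℝ) (recNode X 0 (α ∘ Fin.succAbove i)) : Fin (0+2) → ℝ) k)
        = X (∑ t, α t) ((∑ t, α t) - α j) *
            (Fin.insertNth j (0:ℝ) (recNode X 0 (α ∘ Fin.succAbove j)) : Fin (0+2) → ℝ) k
          + X (∑ t, α t) ((∑ t, α t) - α (j.succAbove 0)) *
            (Fin.insertNth (j.succAbove 0) (0:ℝ)
              (recNode X 0 (α ∘ Fin.succAbove (j.succAbove 0))) : Fin (0+2) → ℝ) k :=
      (Fin.sum_univ_succAbove _ j).trans (congrArg _ (Fin.sum_univ_one _))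
    have e2 : (∑ i : Fin (0+2), X (∑ t, α t) ((∑ t, α t) - α i))
        = X (∑ t, α t) ((∑ t, α t) - α j) + X (∑ t, α t) ((∑ t, α t) - α (j.succAbove 0)) :=
      (Fin.sum_univ_succAbove _ j).trans (congrArg _ (Fin.sum_univ_one _))
    rw [e1, e2, hj, Nat.sub_zero, h1 _ hα, hn0, Nat.sub_self, h0 _ hα]
    rw [one_mul, zero_mul, add_zero, add_zero, div_one]
  | succ d ih =>
    have hβ : (∑ t : Fin (d+1+1), α (j.succAbove t)) = ∑ t, α t := by
      have h := Fin.sum_univ_succAbove α j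
      rw [hj, zero_add] at h
      exact h.symm
    -- S > 0
    obtain ⟨i₀, hi₀⟩ : ∃ i₀ : Fin (d+1+1), 1 ≤ α (j.succAbove i₀) := by
      by_contra h
      push_neg at h
      have hz : ∑ t : Fin (d+1+1), α (j.succAbove t) = 0 :=
        Finset.sum_eq_zero fun i _ => by have := h i; omega
      omega
    obtain ⟨i₁, hi₁⟩ : ∃ i₁ : Fin (d+1+1), i₁ ≠ i₀ := by
      rcases Nat.eq_zero_or_pos (i₀ : ℕ) with h | h
      · exact ⟨⟨1, by omega⟩, by simp [Ne, Fin.ext_iff, h]⟩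
      · exact ⟨⟨0, by omega⟩, by simp only [Ne, Fin.ext_iff]; omega⟩
    have hpair : α (j.succAbove i₁) + α (j.succAbove i₀) ≤ ∑ t, α t := by
      have hss : ∑ i' ∈ ({i₁, i₀} : Finset (Fin (d+1+1))), α (j.succAbove i')
          ≤ ∑ t : Fin (d+1+1), α (j.succAbove t) :=
        Finset.sum_le_sum_of_subset (Finset.subset_univ _)
      rw [Finset.sum_pair hi₁] at hss
      omega
    obtain ⟨iw, hiw⟩ : ∃ iw : Fin (d+1+1), α (j.succAbove iw) < ∑ t, α t := by
      rcases Nat.lt_or_ge (α (j.succAbove i₀)) (∑ t, α t) with hw | hw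
      · exact ⟨i₀, hw⟩
      · exact ⟨i₁, by omega⟩
    have hSpos : 0 < ∑ i' : Fin (d+1+1), X (∑ t, α t) ((∑ t, α t) - α (j.succAbove i')) := by
      refine Finset.sum_pos' (fun i _ => (hIcc _ _ (Nat.sub_le _ _)).1)
        ⟨iw, Finset.mem_univ _, ?_⟩
      have h := hmono (∑ t, α t) 0 ((∑ t, α t) - α (j.succAbove iw)) (by omega) (Nat.sub_le _ _)
      rwa [h0 _ hα] at h
    funext k
    show (∑ i : Fin (d+1+2), X (∑ t, α t) ((∑ t, α t) - α i) *
        (Fin.insertNth i (0:ℝ) (recNode X (d+1) (α ∘ Fin.succAbove i)) : Fin (d+1+2) → ℝ) k) /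
      (∑ i : Fin (d+1+2), X (∑ t, α t) ((∑ t, α t) - α i)) =
      (Fin.insertNth j (0:ℝ) (recNode X (d+1) (α ∘ Fin.succAbove j)) : Fin (d+1+2) → ℝ) k
    -- per-term rewriting
    have hterm : ∀ i' : Fin (d+1+1),
        X (∑ t, α t) ((∑ t, α t) - α (j.succAbove i')) *
          (Fin.insertNth (j.succAbove i') (0:ℝ)
            (recNode X (d+1) (α ∘ Fin.succAbove (j.succAbove i'))) : Fin (d+1+2) → ℝ) k
        = X (∑ t, α t) ((∑ t, α t) - α (j.succAbove i')) *
          (Fin.insertNth j (0:ℝ)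
            ((Fin.insertNth i' (0:ℝ)
              (recNode X d ((α ∘ Fin.succAbove j) ∘ Fin.succAbove i')) : Fin (d+1+1) → ℝ))
            : Fin (d+1+2) → ℝ) k := by
      intro i'
      by_cases hs : 1 ≤ ∑ t : Fin (d+1+1), α ((j.succAbove i').succAbove t)
      · obtain ⟨kk, hk1, hk2⟩ := hatExists j i'
        have hz : (α ∘ Fin.succAbove (j.succAbove i')) kk = 0 := by
          show α ((j.succAbove i').succAbove kk) = 0
          rw [hk1, hj]
        have hs' : 1 ≤ ∑ t, (α ∘ Fin.succAbove (j.succAbove i')) t := hs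
        have hFG : (Fin.insertNth (j.succAbove i') (0:ℝ)
              (recNode X (d+1) (α ∘ Fin.succAbove (j.succAbove i'))) : Fin (d+1+2) → ℝ)
            = (Fin.insertNth j (0:ℝ)
                ((Fin.insertNth i' (0:ℝ)
                  (recNode X d ((α ∘ Fin.succAbove j) ∘ Fin.succAbove i')) : Fin (d+1+1) → ℝ))
                : Fin (d+1+2) → ℝ) := by
          have hcomp : (α ∘ Fin.succAbove (j.succAbove i')) ∘ Fin.succAbove kk
              = (α ∘ Fin.succAbove j) ∘ Fin.succAbove i' := by
            funext t; exact congrArg α (hk2 t)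
          rw [ih (α ∘ Fin.succAbove (j.succAbove i')) hs' kk hz, hcomp]
          exact myInsertComm j i' kk hk1 hk2 0 0 _
        rw [hFG]
      · push_neg at hs
        have hs0 : ∑ t : Fin (d+1+1), α ((j.succAbove i').succAbove t) = 0 := by omega
        have hsum_i : (∑ t : Fin (d+1+2), α t)
            = α (j.succAbove i') + ∑ t : Fin (d+1+1), α ((j.succAbove i').succAbove t) :=
          Fin.sum_univ_succAbove α (j.succAbove i')
        have hw0 : X (∑ t, α t) ((∑ t, α t) - α (j.succAbove i')) = 0 := by
          have hz : (∑ t, α t) - α (j.succAbove i') = 0 := by omega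
          rw [hz, h0 _ hα]
        rw [hw0, zero_mul, zero_mul]
    -- collapsing the succAbove-sum
    have hsum2 : (∑ i' : Fin (d+1+1), X (∑ t, α t) ((∑ t, α t) - α (j.succAbove i')) *
          (Fin.insertNth j (0:ℝ)
            ((Fin.insertNth i' (0:ℝ)
              (recNode X d ((α ∘ Fin.succAbove j) ∘ Fin.succAbove i')) : Fin (d+1+1) → ℝ))
            : Fin (d+1+2) → ℝ) k)
        = (∑ i' : Fin (d+1+1), X (∑ t, α t) ((∑ t, α t) - α (j.succAbove i'))) *
          (Fin.insertNth j (0:ℝ) (recNode X (d+1) (α ∘ Fin.succAbove j)) : Fin (d+1+2) → ℝ) k := by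
      rcases eq_or_ne k j with rfl | hk
      · simp
      · obtain ⟨m, hm⟩ := Fin.exists_succAbove_eq hk
        have happ : ∀ (x : ℝ) (f : Fin (d+1+1) → ℝ),
            (Fin.insertNth j x f : Fin (d+1+2) → ℝ) k = f m := fun x f => myInsertApply j x f hm
        simp only [happ]
        have hR : recNode X (d+1) (α ∘ Fin.succAbove j) m
            = (∑ i' : Fin (d+1+1), X (∑ t, α t) ((∑ t, α t) - α (j.succAbove i')) *
                (Fin.insertNth i' (0:ℝ)
                  (recNode X d ((α ∘ Fin.succAbove j) ∘ Fin.succAbove i')) : Fin (d+1+1) → ℝ) m) /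
              (∑ i' : Fin (d+1+1), X (∑ t, α t) ((∑ t, α t) - α (j.succAbove i'))) := by
          show (∑ i' : Fin (d+1+1),
              X (∑ t, (α ∘ Fin.succAbove j) t) ((∑ t, (α ∘ Fin.succAbove j) t)
                  - (α ∘ Fin.succAbove j) i') *
                (Fin.insertNth i' (0:ℝ)
                  (recNode X d ((α ∘ Fin.succAbove j) ∘ Fin.succAbove i')) : Fin (d+1+1) → ℝ) m) /
            (∑ i' : Fin (d+1+1),
              X (∑ t, (α ∘ Fin.succAbove j) t) ((∑ t, (α ∘ Fin.succAbove j) t)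
                  - (α ∘ Fin.succAbove j) i')) = _
          simp only [Function.comp_apply]
          rw [hβ]
        rw [eq_div_iff (ne_of_gt hSpos)] at hR
        linear_combination -hR
    have e2 : (∑ i : Fin (d+1+2), X (∑ t, α t) ((∑ t, α t) - α i))
        = 1 + ∑ i' : Fin (d+1+1), X (∑ t, α t) ((∑ t, α t) - α (j.succAbove i')) := by
      have h := Fin.sum_univ_succAbove (fun i => X (∑ t, α t) ((∑ t, α t) - α i)) j
      rw [hj, Nat.sub_zero, h1 _ hα] at h
      exact h
    have e1 : (∑ i : Fin (d+1+2), X (∑ t, α t) ((∑ t, α t) - α i) *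
          (Fin.insertNth i (0:ℝ) (recNode X (d+1) (α ∘ Fin.succAbove i)) : Fin (d+1+2) → ℝ) k)
        = (Fin.insertNth j (0:ℝ) (recNode X (d+1) (α ∘ Fin.succAbove j)) : Fin (d+1+2) → ℝ) k
          + (∑ i' : Fin (d+1+1), X (∑ t, α t) ((∑ t, α t) - α (j.succAbove i'))) *
            (Fin.insertNth j (0:ℝ) (recNode X (d+1) (α ∘ Fin.succAbove j)) : Fin (d+1+2) → ℝ) k := by
      calc (∑ i : Fin (d+1+2), X (∑ t, α t) ((∑ t, α t) - α i) *
            (Fin.insertNth i (0:ℝ) (recNode X (d+1) (α ∘ Fin.succAbove i)) : Fin (d+1+2) → ℝ) k)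
          = X (∑ t, α t) ((∑ t, α t) - α j) *
              (Fin.insertNth j (0:ℝ) (recNode X (d+1) (α ∘ Fin.succAbove j)) : Fin (d+1+2) → ℝ) k
            + ∑ i' : Fin (d+1+1), X (∑ t, α t) ((∑ t, α t) - α (j.succAbove i')) *
              (Fin.insertNth (j.succAbove i') (0:ℝ)
                (recNode X (d+1) (α ∘ Fin.succAbove (j.succAbove i'))) : Fin (d+1+2) → ℝ) k :=
            Fin.sum_univ_succAbove _ j
        _ = X (∑ t, α t) ((∑ t, α t) - α j) *
              (Fin.insertNth j (0:ℝ) (recNode X (d+1) (α ∘ Fin.succAbove j)) : Fin (d+1+2) → ℝ) k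
            + ∑ i' : Fin (d+1+1), X (∑ t, α t) ((∑ t, α t) - α (j.succAbove i')) *
              (Fin.insertNth j (0:ℝ)
                ((Fin.insertNth i' (0:ℝ)
                  (recNode X d ((α ∘ Fin.succAbove j) ∘ Fin.succAbove i')) : Fin (d+1+1) → ℝ))
                : Fin (d+1+2) → ℝ) k :=
            congrArg₂ (· + ·) rfl (Finset.sum_congr rfl fun i' _ => hterm i')
        _ = X (∑ t, α t) ((∑ t, α t) - α j) *
              (Fin.insertNth j (0:ℝ) (recNode X (d+1) (α ∘ Fin.succAbove j)) : Fin (d+1+2) → ℝ) k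
            + (∑ i' : Fin (d+1+1), X (∑ t, α t) ((∑ t, α t) - α (j.succAbove i'))) *
              (Fin.insertNth j (0:ℝ) (recNode X (d+1) (α ∘ Fin.succAbove j)) : Fin (d+1+2) → ℝ) k :=
            congrArg₂ (· + ·) rfl hsum2
        _ = _ := by rw [hj, Nat.sub_zero, h1 _ hα, one_mul]
    rw [e1, e2]
    have hS1 : (0:ℝ) < 1 + ∑ i' : Fin (d+1+1), X (∑ t, α t) ((∑ t, α t) - α (j.succAbove i')) := by
      linarith
    rw [div_eq_iff (ne_of_gt hS1)]
    ring
end
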